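/- For every positive integer m, the sum of 1/k over odd integers k with 5 ≤ k ≤ 6m+3 and k not divisible by 3 is strictly less than ln(3^{1/2} · 2^{2/3}) + γ/3 − 1 + (1/3)·ln(m) + 5/(6m). -/

import Mathlib

open Real Finset

noncomputable def hr (n : ℕ) : ℝ := (harmonic n : ℝ)

lemma hr_succ (n : ℕ) : hr (n + 1) = hr n + 1 / (n + 1) := by
  simp only [hr, harmonic_succ]
  push_cast
  ring

lemma key_identity (m : ℕ) :
    ∑ k ∈ (Finset.Icc 5 (6 * m + 3)).filter (fun k => Odd k ∧ ¬ (3 ∣ k)), (1 : ℝ) / k =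
      hr (6 * m + 1) - (1/2) * hr (3 * m) - (1/3) * hr (2 * m) + (1/6) * hr m - 1 := by
  induction m with
  | zero =>
      rw [Finset.Icc_eq_empty (by omega), Finset.filter_empty, Finset.sum_empty]
      norm_num [hr, harmonic_succ, harmonic_zero]
  | succ n ih =>
      have hset : (Finset.Icc 5 (6 * (n + 1) + 3)).filter (fun k => Odd k ∧ ¬ (3 ∣ k))
          = insert (6 * n + 7) (insert (6 * n + 5)
              ((Finset.Icc 5 (6 * n + 3)).filter (fun k => Odd k ∧ ¬ (3 ∣ k)))) := by
        ext k
        simp only [Finset.mem_insert, Finset.mem_filter, Finset.mem_Icc, Nat.odd_iff]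
        omega
      have h7 : (6 * n + 7) ∉ insert (6 * n + 5)
          ((Finset.Icc 5 (6 * n + 3)).filter (fun k => Odd k ∧ ¬ (3 ∣ k))) := by
        simp only [Finset.mem_insert, Finset.mem_filter, Finset.mem_Icc]
        omega
      have h5 : (6 * n + 5) ∉ (Finset.Icc 5 (6 * n + 3)).filter (fun k => Odd k ∧ ¬ (3 ∣ k)) := by
        simp only [Finset.mem_filter, Finset.mem_Icc]
        omega
      rw [hset, Finset.sum_insert h7, Finset.sum_insert h5, ih]
      have e1 : hr (6 * (n + 1) + 1) = hr (6 * n + 1) + 1 / (6 * (n:ℝ) + 2) + 1 / (6 * n + 3)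
          + 1 / (6 * n + 4) + 1 / (6 * n + 5) + 1 / (6 * n + 6) + 1 / (6 * n + 7) := by
        rw [show 6 * (n + 1) + 1 = (6*n+6) + 1 by ring, hr_succ,
            show 6*n+6 = (6*n+5)+1 by ring, hr_succ,
            show 6*n+5 = (6*n+4)+1 by ring, hr_succ,
            show 6*n+4 = (6*n+3)+1 by ring, hr_succ,
            show 6*n+3 = (6*n+2)+1 by ring, hr_succ,
            show 6*n+2 = (6*n+1)+1 by ring, hr_succ]
        push_cast
        ring
      have e2 : hr (3 * (n + 1)) = hr (3 * n) + 1 / (3 * (n:ℝ) + 1) + 1 / (3 * n + 2)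
          + 1 / (3 * n + 3) := by
        rw [show 3 * (n + 1) = (3*n+2) + 1 by ring, hr_succ,
            show 3*n+2 = (3*n+1)+1 by ring, hr_succ,
            show 3*n+1 = (3*n)+1 by ring, hr_succ]
        push_cast
        ring
      have e3 : hr (2 * (n + 1)) = hr (2 * n) + 1 / (2 * (n:ℝ) + 1) + 1 / (2 * n + 2) := by
        rw [show 2 * (n + 1) = (2*n+1) + 1 by ring, hr_succ,
            show 2*n+1 = (2*n)+1 by ring, hr_succ]
        push_cast
        ring
      have e4 : hr (n + 1) = hr n + 1 / ((n:ℝ) + 1) := by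
        rw [hr_succ]
      rw [e1, e2, e3, e4]
      push_cast
      have c1 : (6:ℝ) * n + 2 > 0 := by positivity
      have c2 : (6:ℝ) * n + 3 > 0 := by positivity
      have c3 : (6:ℝ) * n + 4 > 0 := by positivity
      have c4 : (6:ℝ) * n + 5 > 0 := by positivity
      have c5 : (6:ℝ) * n + 6 > 0 := by positivity
      have c6 : (6:ℝ) * n + 7 > 0 := by positivity
      have c7 : (3:ℝ) * n + 1 > 0 := by positivity
      have c8 : (3:ℝ) * n + 2 > 0 := by positivity
      have c9 : (3:ℝ) * n + 3 > 0 := by positivity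
      have c10 : (2:ℝ) * n + 1 > 0 := by positivity
      have c11 : (2:ℝ) * n + 2 > 0 := by positivity
      have c12 : (n:ℝ) + 1 > 0 := by positivity
      field_simp
      ring

lemma hr_gt (n : ℕ) (hn : 0 < n) :
    Real.log n + Real.eulerMascheroniConstant < hr n := by
  have h := Real.eulerMascheroniConstant_lt_eulerMascheroniSeq' n
  rw [Real.eulerMascheroniSeq', if_neg hn.ne'] at h
  unfold hr
  linarith

lemma hr_lt (n : ℕ) (hn : 0 < n) :
    hr n < Real.log n + Real.eulerMascheroniConstant + 1 / n := by
  have h := Real.eulerMascheroniSeq_lt_eulerMascheroniConstant n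
  rw [Real.eulerMascheroniSeq] at h
  have hn' : (0:ℝ) < n := by exact_mod_cast hn
  have hlog : Real.log (n + 1) - Real.log n ≤ 1 / n := by
    rw [← Real.log_div (by positivity) (by positivity)]
    have := Real.log_le_sub_one_of_pos (x := ((n:ℝ) + 1) / n) (by positivity)
    calc Real.log (((n:ℝ) + 1) / n) ≤ ((n:ℝ) + 1) / n - 1 := this
      _ = 1 / n := by field_simp; ring
  unfold hr
  linarith

theorem odd_nondiv3_recip_sum_bound (m : ℕ) (hm : 0 < m) :
    ∑ k ∈ (Finset.Icc 5 (6 * m + 3)).filter (fun k => Odd k ∧ ¬ (3 ∣ k)), (1 : ℝ) / k <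
      Real.log ((3 : ℝ) ^ ((1 : ℝ) / 2) * (2 : ℝ) ^ ((2 : ℝ) / 3)) +
        Real.eulerMascheroniConstant / 3 - 1 + (1 / 3) * Real.log m + 5 / (6 * m) := by
  have hm' : (0:ℝ) < m := by exact_mod_cast hm
  rw [key_identity]
  have b1 := hr_lt (6 * m + 1) (by omega)
  have b2 := hr_gt (3 * m) (by omega)
  have b3 := hr_gt (2 * m) (by omega)
  have b4 := hr_lt m hm
  -- log values
  have l1 : Real.log (3 * m) = Real.log 3 + Real.log m :=
    Real.log_mul (by norm_num) hm'.ne'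
  have l2 : Real.log (2 * m) = Real.log 2 + Real.log m :=
    Real.log_mul (by norm_num) hm'.ne'
  have l3 : Real.log (6 * m + 1) ≤ Real.log 6 + Real.log m + 1 / (6 * m) := by
    have h6m : (0:ℝ) < 6 * m := by positivity
    have : Real.log (6 * m + 1) - Real.log (6 * m) ≤ 1 / (6 * m) := by
      rw [← Real.log_div (by positivity) (by positivity)]
      have := Real.log_le_sub_one_of_pos (x := (6 * (m:ℝ) + 1) / (6 * m)) (by positivity)
      calc Real.log ((6 * (m:ℝ) + 1) / (6 * m)) ≤ (6 * (m:ℝ) + 1) / (6 * m) - 1 := this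
        _ = 1 / (6 * m) := by field_simp; ring
    have l6 : Real.log (6 * (m:ℝ)) = Real.log 6 + Real.log m :=
      Real.log_mul (by norm_num) hm'.ne'
    linarith
  have lrhs : Real.log ((3 : ℝ) ^ ((1 : ℝ) / 2) * (2 : ℝ) ^ ((2 : ℝ) / 3)) =
      (1/2) * Real.log 3 + (2/3) * Real.log 2 := by
    rw [Real.log_mul (by positivity) (by positivity), Real.log_rpow (by norm_num),
      Real.log_rpow (by norm_num)]
  have l63 : Real.log 6 = Real.log 2 + Real.log 3 := by
    rw [show (6:ℝ) = 2 * 3 by norm_num, Real.log_mul (by norm_num) (by norm_num)]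
  -- error bounds
  have err1 : 1 / ((6:ℝ) * m + 1) ≤ 1 / (6 * m) := by
    apply div_le_div_of_nonneg_left (by norm_num) (by positivity)
    linarith
  have err2 : 1 / (m:ℝ) = 6 / (6 * m) := by field_simp
  push_cast at b1 b2 b3 b4 l3 ⊢
  rw [lrhs]
  rw [l63] at l3
  have h6m : (0:ℝ) < 6 * m := by positivity
  have tpos : (0:ℝ) < 1 / (6 * (m:ℝ)) := by positivity
  have h5t : 5 / (6 * (m:ℝ)) = 5 * (1 / (6 * m)) := by ring
  have h6t : 6 / (6 * (m:ℝ)) = 6 * (1 / (6 * m)) := by ring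
  linarith [b1, b2, b3, b4, l1, l2, l3, err1, err2, tpos, h5t, h6t]
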